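/- For every q ≥ 1 and every k, the elements F(e^{i₁} ∧ e^{i₂} ∧ ⋯ ∧ e^{i_q}, e^{i_q}) with 2 ≤ i₁ < i₂ < ⋯ < i_q and i₁ + i₂ + ⋯ + i_q + i_q + 1 = k form a basis of the kernel of the restriction of D to Λ^{q+1}_k(h*); moreover, the kernel of the restriction of D to h* = Λ¹(h*) is spanned by e². -/

import Mathlib

set_option maxSynthPendingDepth 3

/-- The field `ℤ₂ = ℤ/2ℤ`. -/
abbrev K2 : Type := ZMod 2

/-- The exterior algebra over `ℤ₂` on generators `e 1, e 2, …`, realized as the free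
`ℤ₂`-module on the square-free monomials `e^S`, indexed by finite sets `S` of indices
(over `ℤ₂` all signs are trivial). -/
abbrev Lam : Type := Finset ℕ →₀ K2

/-- The generator `eⁱ` (the `i`-th dual basis vector). -/
noncomputable def e (i : ℕ) : Lam := Finsupp.single {i} 1

/-- The wedge product: on monomials, `e^S ∧ e^T = e^(S ∪ T)` if `S` and `T` are disjoint and `0`
otherwise (there are no signs over `ℤ₂`); extended bilinearly. -/
noncomputable def wedge (x y : Lam) : Lam :=
  x.sum fun S a => y.sum fun T b =>
    if Disjoint S T then Finsupp.single (S ∪ T) (a * b) else 0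

/-- A derivation of the exterior algebra (over `ℤ₂` all signs are trivial, so the relevant
operators are ordinary derivations). -/
def IsDerivation (D : Module.End K2 Lam) : Prop :=
  ∀ x y : Lam, D (wedge x y) = wedge (D x) y + wedge x (D y)

/-- The subalgebra `Λ(span (eⁱ : i ∈ I))` of the exterior algebra: the span of the monomials
`e^S` with all indices in `I`. -/
noncomputable def lamOn (I : Set ℕ) : Submodule K2 Lam :=
  Submodule.span K2 {x | ∃ S : Finset ℕ, ↑S ⊆ I ∧ x = Finsupp.single S (1 : K2)}

/-- `Λ^q`: the span of the monomials of rank `q` with indices in `I`. -/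
noncomputable def rankPiece (I : Set ℕ) (q : ℕ) : Submodule K2 Lam :=
  Submodule.span K2
    {x | ∃ S : Finset ℕ, ↑S ⊆ I ∧ S.card = q ∧ x = Finsupp.single S (1 : K2)}

/-- `Λ^q_k`: the span of the monomials of rank `q` and degree (weight) `k`, indices in `I`. -/
noncomputable def gradedPiece (I : Set ℕ) (q k : ℕ) : Submodule K2 Lam :=
  Submodule.span K2
    {x | ∃ S : Finset ℕ, ↑S ⊆ I ∧ S.card = q ∧ S.sum id = k ∧ x = Finsupp.single S (1 : K2)}

/-- The cohomology class in `Z ⧸ (B ∩ Z)` of a cocycle `x ∈ Z` (defined to be `0` if `x ∉ Z`). -/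
noncomputable def cls (Z B : Submodule K2 Lam) (x : Lam) :
    ↥Z ⧸ Submodule.comap Z.subtype B := by
  classical exact if hx : x ∈ Z then Submodule.Quotient.mk ⟨x, hx⟩ else 0

/-- `F(ω, eⁱ) = Σ_{l ≥ 0} (Dˡ ω) ∧ e^{i+1+l}`, truncated at `l < N`; as soon as `D^N ω = 0`,
this is the full (finite) sum. -/
noncomputable def Ftrunc (D : Module.End K2 Lam) (N : ℕ) (ω : Lam) (i : ℕ) : Lam :=
  ∑ l ∈ Finset.range N, wedge ((D ^ l) ω) (e (i + 1 + l))

/-- The largest index `i_q` of a monomial `e^S`, `S = {i₁ < … < i_q}`. -/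
def maxIdx (S : Finset ℕ) : ℕ := S.sup id

/-- `F(e^S, eⁱ)` for a monomial `e^S`: since `D` lowers the degree by one, truncating the sum
at the degree of `e^S` already yields the full sum `Σ_{l ≥ 0} (Dˡ e^S) ∧ e^{i+1+l}`. -/
noncomputable def Fmono (D : Module.End K2 Lam) (S : Finset ℕ) (i : ℕ) : Lam :=
  Ftrunc D (S.sum id + 1) (Finsupp.single S 1) i

/-- `F(eⁱ, eⁱ) = eⁱ ∧ e^{i+1} + e^{i−1} ∧ e^{i+2} + ⋯ + e² ∧ e^{2i−1}`. -/
noncomputable def F1 (i : ℕ) : Lam :=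
  ∑ l ∈ Finset.range (i - 1), wedge (e (i - l)) (e (i + 1 + l))

open Finsupp in
theorem wedge_single_left (S : Finset ℕ) (a : K2) (y : Lam) :
    wedge (Finsupp.single S a) y
      = y.sum fun T b => if Disjoint S T then Finsupp.single (S ∪ T) (a * b) else 0 := by
  unfold wedge
  rw [Finsupp.sum_single_index]
  simp [Finsupp.sum]

theorem wedge_single_single (S T : Finset ℕ) (a b : K2) :
    wedge (Finsupp.single S a) (Finsupp.single T b)
      = if Disjoint S T then Finsupp.single (S ∪ T) (a * b) else 0 := by
  rw [wedge_single_left, Finsupp.sum_single_index]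
  simp

theorem wedge_single_right (x : Lam) (T : Finset ℕ) (b : K2) :
    wedge x (Finsupp.single T b)
      = x.sum fun S a => if Disjoint S T then Finsupp.single (S ∪ T) (a * b) else 0 := by
  unfold wedge
  refine Finsupp.sum_congr fun S _ => ?_
  rw [Finsupp.sum_single_index]
  simp

theorem wedge_zero_left (y : Lam) : wedge 0 y = 0 := by
  unfold wedge; simp [Finsupp.sum]

theorem wedge_add_left (x y z : Lam) : wedge (x + y) z = wedge x z + wedge y z := by
  unfold wedge
  rw [Finsupp.sum_add_index']
  · intro S; simp [Finsupp.sum]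
  · intro S a b
    rw [← Finsupp.sum_add]
    refine Finsupp.sum_congr fun T _ => ?_
    split <;> simp [add_mul, Finsupp.single_add]

theorem wedge_add_right (x y z : Lam) : wedge x (y + z) = wedge x y + wedge x z := by
  unfold wedge
  rw [← Finsupp.sum_add]
  refine Finsupp.sum_congr fun S _ => ?_
  rw [Finsupp.sum_add_index']
  · intro T; simp
  · intro T a b; split <;> simp [mul_add, Finsupp.single_add]

theorem wedge_smul_left (c : K2) (x y : Lam) : wedge (c • x) y = c • wedge x y := by
  fin_cases c
  · show wedge ((0:K2) • x) y = (0:K2) • wedge x y; simp [wedge_zero_left]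
  · show wedge ((1:K2) • x) y = (1:K2) • wedge x y; simp

theorem one_single : (Finsupp.single (∅ : Finset ℕ) (1:K2)) = Finsupp.single ∅ 1 := rfl

theorem wedge_one_right (x : Lam) : wedge x (Finsupp.single (∅ : Finset ℕ) (1:K2)) = x := by
  rw [wedge_single_right]
  simpa using Finsupp.sum_single x

theorem wedge_zero_right (x : Lam) : wedge x 0 = 0 := by
  unfold wedge; simp [Finsupp.sum]

theorem wedge_sum_right (x : Lam) {α : Type*} (s : Finset α) (f : α → Lam) :
    wedge x (∑ i ∈ s, f i) = ∑ i ∈ s, wedge x (f i) := by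
  classical
  induction s using Finset.induction_on with
  | empty => simp [wedge_zero_right]
  | insert _ _ h ih => rw [Finset.sum_insert h, Finset.sum_insert h, wedge_add_right, ih]

theorem wedge_one_left (x : Lam) : wedge (Finsupp.single (∅ : Finset ℕ) (1:K2)) x = x := by
  rw [wedge_single_left]
  simpa using Finsupp.sum_single x

theorem wedge_e_single (a : ℕ) (S : Finset ℕ) (h : a ∉ S) :
    wedge (e a) (Finsupp.single S (1:K2)) = Finsupp.single (insert a S) 1 := by
  rw [e, wedge_single_single, if_pos (by simpa using h), show ({a} : Finset ℕ) ∪ S = insert a S from rfl, mul_one]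

/-- The term of `D e^S` obtained by lowering the index `i`. -/
noncomputable def dterm (i : ℕ) (S : Finset ℕ) : Lam :=
  if 3 ≤ i ∧ i - 1 ∉ S then Finsupp.single (insert (i-1) (S.erase i)) 1 else 0

/-- `D e^S` as an explicit sum. -/
noncomputable def Dm (S : Finset ℕ) : Lam := ∑ i ∈ S, dterm i S

theorem D_one (D : Module.End K2 Lam) (hD : IsDerivation D) :
    D (Finsupp.single (∅ : Finset ℕ) (1:K2)) = 0 := by
  have h := hD (Finsupp.single (∅ : Finset ℕ) (1:K2)) (Finsupp.single (∅ : Finset ℕ) (1:K2))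
  rw [wedge_single_single, if_pos (by simp)] at h
  simp only [Finset.empty_union, mul_one] at h
  rw [wedge_one_right, wedge_one_left] at h
  exact (left_eq_add.mp h)

theorem D_single (D : Module.End K2 Lam)
    (hD : IsDerivation D) (hD2 : D (e 2) = 0)
    (hDi : ∀ i, 3 ≤ i → D (e i) = e (i - 1)) :
    ∀ S : Finset ℕ, (∀ i ∈ S, 2 ≤ i) → D (Finsupp.single S (1:K2)) = Dm S := by
  classical
  intro S
  induction S using Finset.induction_on with
  | empty => intro _; rw [D_one D hD]; simp [Dm]
  | @insert a S ha ih =>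
    intro hge
    have ha2 : 2 ≤ a := hge a (Finset.mem_insert_self a S)
    have hS2 : ∀ i ∈ S, 2 ≤ i := fun i hi => hge i (Finset.mem_insert_of_mem hi)
    rw [← wedge_e_single a S ha, hD, ih hS2]
    have claim1 : wedge (D (e a)) (Finsupp.single S 1) = dterm a (insert a S) := by
      rcases eq_or_lt_of_le ha2 with h2 | h3
      · rw [← h2, hD2, wedge_zero_left, dterm, if_neg (by omega)]
      · have h3 : 3 ≤ a := h3
        rw [hDi a h3, e, wedge_single_single, dterm, Finset.erase_insert ha]
        by_cases hm : a - 1 ∈ S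
        · rw [if_neg (by simpa using hm), if_neg (by simp [hm])]
        · rw [if_pos (by simpa using hm), if_pos ⟨h3, by simp [hm]; omega⟩]
          rw [show ({a-1} : Finset ℕ) ∪ S = insert (a-1) S from rfl, mul_one]
    have claim2 : wedge (e a) (Dm S) = ∑ i ∈ S, dterm i (insert a S) := by
      rw [Dm, wedge_sum_right]
      refine Finset.sum_congr rfl fun i hi => ?_
      have hia : i ≠ a := fun h => ha (h ▸ hi)
      by_cases h3 : 3 ≤ i
      · by_cases hm : i - 1 ∈ S
        · rw [dterm, if_neg (by simp [hm]), wedge_zero_right, dterm,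
            if_neg (by simp [Finset.mem_insert]; tauto)]
        · rw [dterm, if_pos ⟨h3, hm⟩]
          by_cases hia1 : i - 1 = a
          · rw [dterm, if_neg (by simp [hia1]), e, wedge_single_single,
              if_neg (by simp [hia1])]
          · rw [wedge_e_single a _ (by
                simp only [Finset.mem_insert, Finset.mem_erase, not_or]
                exact ⟨fun h => hia1 h.symm, fun h => ha h.2⟩),
              dterm, if_pos ⟨h3, by simp [Finset.mem_insert]; tauto⟩,
              Finset.erase_insert_of_ne (Ne.symm hia), Finset.insert_comm]
      · rw [dterm, if_neg (by tauto), wedge_zero_right, dterm, if_neg (by tauto)]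
    rw [claim1, claim2, Dm, Finset.sum_insert ha]

theorem D_apply (D : Module.End K2 Lam)
    (hD : IsDerivation D) (hD2 : D (e 2) = 0)
    (hDi : ∀ i, 3 ≤ i → D (e i) = e (i - 1))
    (x : Lam) (hx : ∀ T ∈ x.support, ∀ i ∈ T, 2 ≤ i) :
    D x = x.sum fun T a => a • Dm T := by
  conv_lhs => rw [← Finsupp.sum_single x]
  rw [map_finsuppSum]
  refine Finsupp.sum_congr fun T hT => ?_
  rw [← Finsupp.smul_single_one, map_smul, D_single D hD hD2 hDi T (hx T hT)]

theorem Dm_apply_ne_zero {T U : Finset ℕ} (h : Dm T U ≠ 0) :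
    ∃ i ∈ T, 3 ≤ i ∧ i - 1 ∉ T ∧ U = insert (i-1) (T.erase i) := by
  rw [Dm, Finset.sum_apply'] at h
  obtain ⟨i, hi, hne⟩ := Finset.exists_ne_zero_of_sum_ne_zero h
  rw [dterm] at hne
  by_cases hc : 3 ≤ i ∧ i - 1 ∉ T
  · rw [if_pos hc, Finsupp.single_apply] at hne
    refine ⟨i, hi, hc.1, hc.2, ?_⟩
    by_contra hU
    exact hne (by rw [if_neg (by exact fun h => hU h.symm)])
  · rw [if_neg hc] at hne; exact absurd rfl hne

theorem mem_supported_iff {𝒮 : Set (Finset ℕ)} {x : Lam} :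
    x ∈ Finsupp.supported K2 K2 𝒮 ↔ ∀ T, x T ≠ 0 → T ∈ 𝒮 := by
  rw [Finsupp.mem_supported']
  constructor
  · intro h T hT; by_contra hc; exact hT (h T hc)
  · intro h T hT; by_contra hc; exact hT (h T hc)

theorem D_supported (D : Module.End K2 Lam)
    (hD : IsDerivation D) (hD2 : D (e 2) = 0)
    (hDi : ∀ i, 3 ≤ i → D (e i) = e (i - 1))
    (m q c j : ℕ) (x : Lam)
    (hx : x ∈ Finsupp.supported K2 K2
      {T : Finset ℕ | (∀ i ∈ T, 2 ≤ i ∧ i ≤ m) ∧ T.card = q ∧ T.sum id + j = c}) :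
    D x ∈ Finsupp.supported K2 K2
      {T : Finset ℕ | (∀ i ∈ T, 2 ≤ i ∧ i ≤ m) ∧ T.card = q ∧ T.sum id + (j+1) = c} := by
  rw [mem_supported_iff] at hx
  rw [D_apply D hD hD2 hDi x (fun T hT i hi =>
    ((hx T (Finsupp.mem_support_iff.mp hT)).1 i hi).1)]
  refine Submodule.finsuppSum_mem _ _ _ _ fun T hT0 => Submodule.smul_mem _ _ ?_
  have hTP := hx T hT0
  rw [mem_supported_iff]
  intro U hU
  obtain ⟨i, hiT, h3, hm1, hUeq⟩ := Dm_apply_ne_zero hU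
  have hi1T : i - 1 ∉ T.erase i := fun h => hm1 (Finset.mem_of_mem_erase h)
  have hbd := hTP.1 i hiT
  refine ⟨?_, ?_, ?_⟩
  · intro j hj
    rw [hUeq, Finset.mem_insert] at hj
    rcases hj with h | h
    · omega
    · exact hTP.1 j (Finset.mem_of_mem_erase h)
  · rw [hUeq, Finset.card_insert_of_notMem hi1T, Finset.card_erase_of_mem hiT]
    have h1 := hTP.2.1
    have h2 := Finset.card_pos.mpr ⟨i, hiT⟩
    omega
  · have hsum : i + (T.erase i).sum id = T.sum id := Finset.add_sum_erase T id hiT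
    have h2 := hTP.2.2
    rw [hUeq, Finset.sum_insert hi1T]
    simp only [id_eq] at hsum h2 ⊢
    omega

theorem pow_D_supported (D : Module.End K2 Lam)
    (hD : IsDerivation D) (hD2 : D (e 2) = 0)
    (hDi : ∀ i, 3 ≤ i → D (e i) = e (i - 1))
    (S : Finset ℕ) (hS : ∀ i ∈ S, 2 ≤ i) (l : ℕ) :
    (D ^ l) (Finsupp.single S 1) ∈ Finsupp.supported K2 K2
      {T : Finset ℕ | (∀ i ∈ T, 2 ≤ i ∧ i ≤ maxIdx S) ∧ T.card = S.card
        ∧ T.sum id + l = S.sum id} := by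
  induction l with
  | zero =>
    rw [pow_zero, Module.End.one_apply, mem_supported_iff]
    intro T hT
    rw [Finsupp.single_apply] at hT
    split at hT
    · next h =>
      subst h
      exact ⟨fun i hi => ⟨hS i hi, Finset.le_sup (f := id) hi⟩, rfl, by omega⟩
    · exact absurd rfl hT
  | succ l ih =>
    rw [pow_succ', Module.End.mul_apply]
    exact D_supported D hD hD2 hDi _ _ _ _ _ ih

theorem lam_neg (y : Lam) : -y = y := by
  ext U
  rw [Finsupp.neg_apply, CharTwo.neg_eq]

theorem D_pow_top (D : Module.End K2 Lam)
    (hD : IsDerivation D) (hD2 : D (e 2) = 0)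
    (hDi : ∀ i, 3 ≤ i → D (e i) = e (i - 1))
    (S : Finset ℕ) (hS : ∀ i ∈ S, 2 ≤ i) :
    (D ^ (S.sum id + 1)) (Finsupp.single S 1) = 0 := by
  have h := pow_D_supported D hD hD2 hDi S hS (S.sum id + 1)
  rw [mem_supported_iff] at h
  ext U
  rw [Finsupp.zero_apply]
  by_contra hne
  have := (h U hne).2.2
  omega

theorem wedge_e_apply_zero (x : Lam) (j : ℕ) (U : Finset ℕ) (hU : j ∉ U) :
    wedge x (e j) U = 0 := by
  rw [e, wedge_single_right, Finsupp.sum_apply, Finsupp.sum]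
  refine Finset.sum_eq_zero fun T _ => ?_
  split
  · rw [Finsupp.single_apply, if_neg (fun (h : T ∪ {j} = U) => hU (h ▸ (by simp : j ∈ T ∪ {j})))]
  · rfl

theorem wedge_e_apply (x : Lam) (j : ℕ) (hx : ∀ T, x T ≠ 0 → j ∉ T)
    (T₀ : Finset ℕ) (hT₀ : j ∉ T₀) :
    wedge x (e j) (insert j T₀) = x T₀ := by
  rw [e, wedge_single_right, Finsupp.sum_apply]
  have : ∀ T ∈ x.support,
      (if Disjoint T {j} then Finsupp.single (T ∪ {j}) (x T * 1) else 0) (insert j T₀)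
        = if T = T₀ then x T else 0 := by
    intro T hT
    have hjT : j ∉ T := hx T (Finsupp.mem_support_iff.mp hT)
    rw [if_pos (by simpa using hjT), Finsupp.single_apply, mul_one]
    congr 1
    simp only [eq_iff_iff]
    constructor
    · intro h
      have : (T ∪ {j}).erase j = (insert j T₀).erase j := by rw [h]
      rwa [Finset.union_comm, show ({j} : Finset ℕ) ∪ T = insert j T from rfl,
        Finset.erase_insert hjT, Finset.erase_insert hT₀] at this
    · intro h; subst h; rw [Finset.union_comm]; rfl
  rw [Finsupp.sum, Finset.sum_congr rfl this, Finset.sum_ite_eq']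
  split
  · rfl
  · next h => rw [Finsupp.notMem_support_iff.mp h]

theorem wedge_e_supported (x : Lam) (j : ℕ) {𝒮 : Set (Finset ℕ)}
    (hx : x ∈ Finsupp.supported K2 K2 𝒮) :
    wedge x (e j) ∈ Finsupp.supported K2 K2 {U | ∃ T ∈ 𝒮, j ∉ T ∧ U = insert j T} := by
  rw [mem_supported_iff] at hx ⊢
  intro U hU
  rw [e, wedge_single_right, Finsupp.sum_apply] at hU
  obtain ⟨T, hT, hne⟩ := Finset.exists_ne_zero_of_sum_ne_zero hU
  dsimp only at hne
  split at hne
  · next hd =>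
    rw [Finsupp.single_apply] at hne
    split at hne
    · next h =>
      refine ⟨T, hx T (Finsupp.mem_support_iff.mp hT), by simpa using hd, ?_⟩
      rw [← h, Finset.union_comm]; rfl
    · exact absurd rfl hne
  · exact absurd rfl hne

theorem wedge_single_e (S : Finset ℕ) (j : ℕ) (h : j ∉ S) :
    wedge (Finsupp.single S (1:K2)) (e j) = Finsupp.single (insert j S) 1 := by
  rw [e, wedge_single_single, if_pos (by simp [Finset.disjoint_right, h]),
    Finset.union_comm, show ({j} : Finset ℕ) ∪ S = insert j S from rfl, mul_one]

theorem maxIdx_mem {S : Finset ℕ} (h : S.Nonempty) : maxIdx S ∈ S := by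
  obtain ⟨b, hb, he⟩ := Finset.exists_mem_eq_sup S h id
  rw [maxIdx, he]; exact hb

theorem le_maxIdx {S : Finset ℕ} {i : ℕ} (h : i ∈ S) : i ≤ maxIdx S :=
  Finset.le_sup (f := id) h

theorem D_Fmono (D : Module.End K2 Lam)
    (hD : IsDerivation D) (hD2 : D (e 2) = 0)
    (hDi : ∀ i, 3 ≤ i → D (e i) = e (i - 1))
    (S : Finset ℕ) (hS : ∀ i ∈ S, 2 ≤ i) (hne : S.Nonempty) :
    D (Fmono D S (maxIdx S)) = 0 := by
  set m := maxIdx S with hm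
  have hmS : m ∈ S := maxIdx_mem hne
  have hm2 : 2 ≤ m := hS m hmS
  rw [Fmono, Ftrunc, map_sum]
  have hterm : ∀ l, D (wedge ((D ^ l) (Finsupp.single S 1)) (e (m + 1 + l)))
      = (fun l => wedge ((D ^ l) (Finsupp.single S 1)) (e (m + l))) (l+1)
        - (fun l => wedge ((D ^ l) (Finsupp.single S 1)) (e (m + l))) l := by
    intro l
    have h1 : D ((D ^ l) (Finsupp.single S 1)) = (D ^ (l+1)) (Finsupp.single S (1:K2)) := by
      rw [pow_succ', Module.End.mul_apply]
    have h2 : D (e (m + 1 + l)) = e (m + l) := by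
      rw [hDi _ (by omega)]; congr 1; omega
    dsimp only
    rw [hD, h1, h2, sub_eq_add_neg, lam_neg, show m + (l+1) = m + 1 + l by ring]
  rw [Finset.sum_congr rfl (fun l _ => hterm l), Finset.sum_range_sub
    (fun l => wedge ((D ^ l) (Finsupp.single S 1)) (e (m + l)))]
  rw [D_pow_top D hD hD2 hDi S hS, wedge_zero_left, pow_zero, Module.End.one_apply]
  rw [show m + 0 = m from rfl, e, wedge_single_single, if_neg (by simp [Finset.disjoint_right, hmS])]
  simp

theorem gradedPiece_eq (I : Set ℕ) (q k : ℕ) :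
    gradedPiece I q k
      = Finsupp.supported K2 K2 {S : Finset ℕ | ↑S ⊆ I ∧ S.card = q ∧ S.sum id = k} := by
  rw [gradedPiece, Finsupp.supported_eq_span_single]
  congr 1
  ext x
  constructor
  · rintro ⟨S, h1, h2, h3, rfl⟩; exact ⟨S, ⟨h1, h2, h3⟩, rfl⟩
  · rintro ⟨S, ⟨h1, h2, h3⟩, rfl⟩; exact ⟨S, h1, h2, h3, rfl⟩

theorem rankPiece_eq (I : Set ℕ) (q : ℕ) :
    rankPiece I q
      = Finsupp.supported K2 K2 {S : Finset ℕ | ↑S ⊆ I ∧ S.card = q} := by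
  rw [rankPiece, Finsupp.supported_eq_span_single]
  congr 1
  ext x
  constructor
  · rintro ⟨S, h1, h2, rfl⟩; exact ⟨S, ⟨h1, h2⟩, rfl⟩
  · rintro ⟨S, ⟨h1, h2⟩, rfl⟩; exact ⟨S, h1, h2, rfl⟩

theorem Fmono_mem_graded (D : Module.End K2 Lam)
    (hD : IsDerivation D) (hD2 : D (e 2) = 0)
    (hDi : ∀ i, 3 ≤ i → D (e i) = e (i - 1))
    (S : Finset ℕ) (hS : ∀ i ∈ S, 2 ≤ i) (hne : S.Nonempty) :
    Fmono D S (maxIdx S)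
      ∈ gradedPiece {i : ℕ | 2 ≤ i} (S.card + 1) (S.sum id + maxIdx S + 1) := by
  have hm2 : 2 ≤ maxIdx S := hS _ (maxIdx_mem hne)
  rw [gradedPiece_eq, Fmono, Ftrunc]
  refine Submodule.sum_mem _ fun l _ => ?_
  have hw := wedge_e_supported _ (maxIdx S + 1 + l) (pow_D_supported D hD hD2 hDi S hS l)
  rw [mem_supported_iff] at hw ⊢
  intro U hU
  obtain ⟨T, ⟨hTb, hTc, hTs⟩, hjT, rfl⟩ := hw U hU
  refine ⟨?_, ?_, ?_⟩
  · intro i hi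
    simp only [Finset.coe_insert, Set.mem_insert_iff, Finset.mem_coe] at hi
    rcases hi with rfl | h
    · simp only [Set.mem_setOf_eq]; omega
    · exact (hTb i h).1
  · rw [Finset.card_insert_of_notMem hjT, hTc]
  · rw [Finset.sum_insert hjT]
    simp only [id_eq] at hTs ⊢
    omega

theorem Fmono_apply_top (D : Module.End K2 Lam)
    (hD : IsDerivation D) (hD2 : D (e 2) = 0)
    (hDi : ∀ i, 3 ≤ i → D (e i) = e (i - 1))
    (S : Finset ℕ) (hS : ∀ i ∈ S, 2 ≤ i) (hne : S.Nonempty) :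
    Fmono D S (maxIdx S) (insert (maxIdx S + 1) S) = 1 := by
  set m := maxIdx S with hm
  rw [Fmono, Ftrunc, Finset.sum_apply']
  rw [Finset.sum_eq_single_of_mem 0 (Finset.mem_range.mpr (by omega))]
  · rw [pow_zero, Module.End.one_apply,
      wedge_single_e _ _ (fun (h : m + 1 + 0 ∈ S) => by have := le_maxIdx h; omega),
      show m + 1 + 0 = m + 1 from rfl, Finsupp.single_apply, if_pos rfl]
  · intro l _ hl0
    refine wedge_e_apply_zero _ _ _ (fun hmem => ?_)
    rw [Finset.mem_insert] at hmem
    rcases hmem with h | h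
    · omega
    · have := le_maxIdx h; omega

theorem Fmono_apply_tc_zero (D : Module.End K2 Lam)
    (hD : IsDerivation D) (hD2 : D (e 2) = 0)
    (hDi : ∀ i, 3 ≤ i → D (e i) = e (i - 1))
    (S : Finset ℕ) (hS : ∀ i ∈ S, 2 ≤ i) (hne : S.Nonempty)
    (T' : Finset ℕ) (hT'tc : maxIdx T' - 1 ∈ T')
    (hT'ne : T' ≠ insert (maxIdx S + 1) S) :
    Fmono D S (maxIdx S) T' = 0 := by
  set m := maxIdx S with hm
  have hm2 : 2 ≤ m := hS _ (maxIdx_mem hne)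
  rw [Fmono, Ftrunc, Finset.sum_apply']
  refine Finset.sum_eq_zero fun l _ => ?_
  rcases Nat.eq_zero_or_pos l with rfl | hl0
  · rw [pow_zero, Module.End.one_apply,
      wedge_single_e _ _ (fun (h : m + 1 + 0 ∈ S) => by have := le_maxIdx h; omega),
      show m + 1 + 0 = m + 1 from rfl, Finsupp.single_apply,
      if_neg (fun h => hT'ne h.symm)]
  · by_contra hne0
    have hw := wedge_e_supported _ (m+1+l) (pow_D_supported D hD hD2 hDi S hS l)
    rw [mem_supported_iff] at hw
    obtain ⟨T, ⟨hTb, _, _⟩, hjT, hEq⟩ := hw T' hne0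
    have hmax : maxIdx T' = m + 1 + l := by
      rw [hEq, maxIdx]
      apply le_antisymm
      · refine Finset.sup_le fun i hi => ?_
        rw [Finset.mem_insert] at hi
        rcases hi with rfl | h
        · exact le_rfl
        · have := (hTb i h).2; simp only [id_eq]; omega
      · exact Finset.le_sup (f := id) (Finset.mem_insert_self _ _)
    rw [hmax, hEq, Finset.mem_insert] at hT'tc
    rcases hT'tc with h | h
    · omega
    · have := (hTb _ h).2; omega

/-- Second largest element. -/
def sndIdx (T : Finset ℕ) : ℕ := maxIdx (T.erase (maxIdx T))

theorem mem_le_sndIdx {T : Finset ℕ} {i : ℕ} (hi : i ∈ T) (hne : i ≠ maxIdx T) :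
    i ≤ sndIdx T := le_maxIdx (Finset.mem_erase.mpr ⟨hne, hi⟩)

theorem maxIdx_insert_top {a : ℕ} {s : Finset ℕ} (h : ∀ j ∈ s, j ≤ a) :
    maxIdx (insert a s) = a := by
  rw [maxIdx]
  apply le_antisymm
  · refine Finset.sup_le fun i hi => ?_
    rcases Finset.mem_insert.mp hi with rfl | h'
    · exact le_rfl
    · exact h i h'
  · exact Finset.le_sup (f := id) (Finset.mem_insert_self _ _)

theorem D_apply_coeff (D : Module.End K2 Lam)
    (hD : IsDerivation D) (hD2 : D (e 2) = 0)
    (hDi : ∀ i, 3 ≤ i → D (e i) = e (i - 1))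
    (y : Lam) (hy : ∀ T, y T ≠ 0 → ∀ i ∈ T, 2 ≤ i) (U : Finset ℕ) :
    D y U = ∑ T ∈ y.support, y T * Dm T U := by
  rw [D_apply D hD hD2 hDi y (fun T hT => hy T (Finsupp.mem_support_iff.mp hT)),
    Finsupp.sum_apply, Finsupp.sum]
  exact Finset.sum_congr rfl fun T _ => by rw [Finsupp.smul_apply, smul_eq_mul]

theorem crux (D : Module.End K2 Lam)
    (hD : IsDerivation D) (hD2 : D (e 2) = 0)
    (hDi : ∀ i, 3 ≤ i → D (e i) = e (i - 1))
    (q k : ℕ) (hq : 1 ≤ q) (y : Lam)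
    (hy : ∀ T, y T ≠ 0 → (∀ i ∈ T, 2 ≤ i) ∧ T.card = q + 1 ∧ T.sum id = k)
    (hker : D y = 0)
    (htc : ∀ T, y T ≠ 0 → maxIdx T - 1 ∉ T) : y = 0 := by
  have key : ∀ g, ∀ T, y T ≠ 0 → sndIdx T + (g + 2) ≤ maxIdx T := by
    intro g
    induction g with
    | zero =>
      intro T hT
      obtain ⟨hbT, hcT, _⟩ := hy T hT
      have hne : T.Nonempty := Finset.card_pos.mp (by omega)
      have hM : maxIdx T ∈ T := maxIdx_mem hne
      have heNe : (T.erase (maxIdx T)).Nonempty := by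
        rw [← Finset.card_pos, Finset.card_erase_of_mem hM]; omega
      have hsE : sndIdx T ∈ T.erase (maxIdx T) := maxIdx_mem heNe
      have hsT : sndIdx T ∈ T := Finset.mem_of_mem_erase hsE
      have hsne : sndIdx T ≠ maxIdx T := (Finset.mem_erase.mp hsE).1
      have hsle : sndIdx T ≤ maxIdx T := le_maxIdx hsT
      have h1 : sndIdx T ≠ maxIdx T - 1 := fun h => htc T hT (h ▸ hsT)
      have hM2 : 2 ≤ maxIdx T := hbT _ hM
      omega
    | succ g ih =>
      intro T hT
      by_contra hcon
      have hgap := ih T hT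
      obtain ⟨hbT, hcT, _⟩ := hy T hT
      set M := maxIdx T with hMdef
      set s := sndIdx T with hsdef
      have hMs : M = s + (g + 2) := by omega
      have hne : T.Nonempty := Finset.card_pos.mp (by omega)
      have hM : M ∈ T := maxIdx_mem hne
      have heNe : (T.erase M).Nonempty := by
        rw [← Finset.card_pos, Finset.card_erase_of_mem hM]; omega
      have hsE : s ∈ T.erase M := maxIdx_mem heNe
      have hsT : s ∈ T := Finset.mem_of_mem_erase hsE
      have hs2 : 2 ≤ s := hbT _ hsT
      have hEr : ∀ j ∈ T.erase M, j ≤ s := fun j hj => le_maxIdx hj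
      set U := insert (M - 1) (T.erase M) with hUdef
      have hM1E : (M : ℕ) - 1 ∉ T.erase M := fun h => by have := hEr _ h; omega
      have hMU : M ∉ U := by
        rw [hUdef, Finset.mem_insert]
        push_neg
        exact ⟨by omega, fun h => (Finset.mem_erase.mp h).1 rfl⟩
      have hmaxU : maxIdx U = M - 1 := maxIdx_insert_top (fun j hj => by have := hEr j hj; omega)
      -- D y at U equals y T
      have hDyU : D y U = y T := by
        rw [D_apply_coeff D hD hD2 hDi y (fun T' h' => (hy T' h').1) U]
        rw [Finset.sum_eq_single_of_mem T (Finsupp.mem_support_iff.mpr hT)]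
        · have hDmT : Dm T U = 1 := by
            rw [Dm, Finset.sum_apply']
            rw [Finset.sum_eq_single_of_mem M hM]
            · rw [dterm, if_pos ⟨by omega, fun h => by
                have := mem_le_sndIdx h (by omega); omega⟩,
                Finsupp.single_apply, if_pos rfl]
            · intro i hi hiM
              rw [dterm]
              split
              · rw [Finsupp.single_apply, if_neg]
                intro hEq
                exact hMU (hEq ▸ Finset.mem_insert_of_mem
                  (Finset.mem_erase.mpr ⟨Ne.symm hiM, hM⟩))
              · rfl
          rw [hDmT, mul_one]
        · intro T'' hmem hne''
          have hT''ne0 : y T'' ≠ 0 := Finsupp.mem_support_iff.mp hmem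
          obtain ⟨hb'', hc'', _⟩ := hy T'' hT''ne0
          have hgap'' := ih T'' hT''ne0
          have hT''nonempty : T''.Nonempty := Finset.card_pos.mp (by omega)
          have hM''mem : maxIdx T'' ∈ T'' := maxIdx_mem hT''nonempty
          set M'' := maxIdx T'' with hM''def
          have hM''2 : 2 ≤ M'' := hb'' _ hM''mem
          have hDm0 : Dm T'' U = 0 := by
            rw [Dm, Finset.sum_apply']
            refine Finset.sum_eq_zero fun i hi => ?_
            rw [dterm]
            split
            swap
            · rfl
            next hcond =>
            rw [Finsupp.single_apply, if_neg]
            intro hEq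
            by_cases hiM : i = M''
            · -- forces T'' = T
              rw [hiM] at hEq
              have hi1E : M'' - 1 ∉ T''.erase M'' := fun h => by
                have := mem_le_sndIdx (Finset.mem_of_mem_erase h)
                  (Finset.mem_erase.mp h).1
                omega
              have hmaxU' : maxIdx U = M'' - 1 := by
                rw [← hEq]
                exact maxIdx_insert_top (fun j hj => by
                  have := mem_le_sndIdx (Finset.mem_of_mem_erase hj)
                    (Finset.mem_erase.mp hj).1
                  omega)
              have hMM : M'' = M := by omega
              have hTT : T'' = T := by
                have hET : T''.erase M'' = T.erase M := by
                  have h1 : U.erase (M'' - 1) = T''.erase M'' := by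
                    rw [← hEq, Finset.erase_insert hi1E]
                  have h2 : U.erase (M - 1) = T.erase M := by
                    rw [hUdef, Finset.erase_insert hM1E]
                  rw [← h1, hMM, h2]
                rw [← Finset.insert_erase hM''mem, hET, hMM, Finset.insert_erase hM]
              exact hne'' hTT
            · -- i is not the top of T''
              have hile : i ≤ sndIdx T'' := mem_le_sndIdx hi hiM
              have hM''U : M'' ∈ U := by
                rw [← hEq]
                exact Finset.mem_insert_of_mem (Finset.mem_erase.mpr ⟨Ne.symm hiM, hM''mem⟩)
              have hmaxU' : maxIdx U = M'' := by
                rw [← hEq]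
                apply le_antisymm
                · refine Finset.sup_le fun j hj => ?_
                  rcases Finset.mem_insert.mp hj with rfl | h'
                  · simp only [id_eq]; omega
                  · exact le_maxIdx (Finset.mem_of_mem_erase h')
                · exact hEq ▸ le_maxIdx hM''U
              have hsU : s ∈ U := Finset.mem_insert_of_mem hsE
              rw [← hEq, Finset.mem_insert] at hsU
              rcases hsU with h' | h'
              · omega
              · have hsT'' : s ∈ T'' := Finset.mem_of_mem_erase h'
                have : s ≤ sndIdx T'' := mem_le_sndIdx hsT'' (by omega)
                omega
          rw [hDm0, mul_zero]
      rw [hker, Finsupp.zero_apply] at hDyU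
      exact hT hDyU.symm
  ext T
  rw [Finsupp.zero_apply]
  by_contra hT
  obtain ⟨hbT, hcT, hsT⟩ := hy T hT
  have hne : T.Nonempty := Finset.card_pos.mp (by omega)
  have h1 := key (k + 1) T hT
  have h2 : maxIdx T ≤ T.sum id :=
    Finset.single_le_sum (f := id) (fun i _ => Nat.zero_le _) (maxIdx_mem hne)
  omega

theorem tcset_inj {S S' : Finset ℕ}
    (h : insert (maxIdx S + 1) S = insert (maxIdx S' + 1) S') : S = S' := by
  have h1 : maxIdx S + 1 ∉ S := fun hc => by have := le_maxIdx hc; omega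
  have h1' : maxIdx S' + 1 ∉ S' := fun hc => by have := le_maxIdx hc; omega
  have h2 : maxIdx S + 1 = maxIdx S' + 1 := by
    have e1 : maxIdx (insert (maxIdx S + 1) S) = maxIdx S + 1 :=
      maxIdx_insert_top (fun j hj => by have := le_maxIdx hj; omega)
    have e2 : maxIdx (insert (maxIdx S' + 1) S') = maxIdx S' + 1 :=
      maxIdx_insert_top (fun j hj => by have := le_maxIdx hj; omega)
    rw [← e1, ← e2, h]
  have h3 := congrArg (fun t : Finset ℕ => t.erase (maxIdx S + 1)) h
  simp only [Finset.erase_insert h1] at h3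
  rw [h2, Finset.erase_insert h1'] at h3
  exact h3

theorem rank1_part (D : Module.End K2 Lam)
    (hD : IsDerivation D) (hD2 : D (e 2) = 0)
    (hDi : ∀ i, 3 ≤ i → D (e i) = e (i - 1)) :
    rankPiece {i : ℕ | 2 ≤ i} 1 ⊓ LinearMap.ker D = Submodule.span K2 {e 2} := by
  apply le_antisymm
  · rintro x hx
    rw [Submodule.mem_inf, rankPiece_eq, mem_supported_iff, LinearMap.mem_ker] at hx
    obtain ⟨hsupp, hker⟩ := hx
    have hsing : ∀ T, x T ≠ 0 → ∃ j, 2 ≤ j ∧ T = {j} := by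
      intro T hT
      obtain ⟨hI, hc⟩ := hsupp T hT
      obtain ⟨j, rfl⟩ := Finset.card_eq_one.mp hc
      exact ⟨j, hI (by simp), rfl⟩
    have hzero : ∀ i, 3 ≤ i → x {i} = 0 := by
      intro i hi3
      by_cases hmem : ({i} : Finset ℕ) ∈ x.support
      swap
      · exact Finsupp.notMem_support_iff.mp hmem
      have hc := D_apply_coeff D hD hD2 hDi x
        (fun T hT j hj => by obtain ⟨j', hj', rfl⟩ := hsing T hT; simp at hj; omega) {i - 1}
      rw [hker, Finsupp.zero_apply] at hc
      rw [Finset.sum_eq_single_of_mem {i} hmem] at hc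
      · have : Dm {i} {i - 1} = 1 := by
          rw [Dm, Finset.sum_singleton, dterm, if_pos ⟨hi3, by simp; omega⟩]
          rw [Finset.erase_singleton, Finsupp.single_apply, if_pos (by simp)]
        rw [this, mul_one] at hc
        exact hc.symm
      · intro T hT hTne
        obtain ⟨j, hj2, rfl⟩ := hsing T (Finsupp.mem_support_iff.mp hT)
        have hji : j ≠ i := fun h => hTne (by rw [h])
        have : Dm {j} {i - 1} = 0 := by
          rw [Dm, Finset.sum_singleton, dterm]
          split
          · next hcd =>
            rw [Finset.erase_singleton, Finsupp.single_apply, if_neg]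
            intro hEq
            have : j - 1 = i - 1 := by
              have := congrArg (fun (t : Finset ℕ) => j - 1 ∈ t) hEq
              simp at this
              omega
            omega
          · rfl
        rw [this, mul_zero]
    have hxeq : x = x {2} • e 2 := by
      ext T
      rw [e, Finsupp.smul_apply, Finsupp.single_apply]
      by_cases hT : T = {2}
      · rw [if_pos hT.symm, hT, smul_eq_mul, mul_one]
      · rw [if_neg (fun h => hT h.symm), smul_zero]
        by_contra hne
        obtain ⟨j, hj2, rfl⟩ := hsing T hne
        rcases Nat.lt_or_ge j 3 with h | h
        · exact hT (by rw [show j = 2 by omega])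
        · exact hne (hzero j h)
    rw [hxeq]
    exact Submodule.smul_mem _ _ (Submodule.subset_span rfl)
  · rw [Submodule.span_le, Set.singleton_subset_iff]
    refine Submodule.mem_inf.mpr ⟨?_, LinearMap.mem_ker.mpr hD2⟩
    rw [rankPiece_eq, mem_supported_iff]
    intro T hT
    rw [e, Finsupp.single_apply] at hT
    split at hT
    · next h =>
      subst h
      exact ⟨by intro j hj; simp at hj; simp [hj], rfl⟩
    · exact absurd rfl hT

/-- Lemma: let `D` be the unique derivation of `Λ(h*) = Λ(e²,e³,…)` with `D e² = 0` and
`D eⁱ = e^{i−1}` for `i > 2`. For every `q ≥ 1` and every `k`, the elements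
`F(e^{i₁} ∧ ⋯ ∧ e^{i_q}, e^{i_q})` with `2 ≤ i₁ < ⋯ < i_q` and `i₁ + ⋯ + i_q + i_q + 1 = k`
(indexed below by the sets `S = {i₁ < ⋯ < i_q}`) form a basis of the kernel of the restriction
of `D` to `Λ^{q+1}_k(h*)`; moreover the kernel of the restriction of `D` to `h* = Λ¹(h*)` is
spanned by `e²`. -/
theorem ker_D_graded_basis (D : Module.End K2 Lam)
    (hD : IsDerivation D) (hD2 : D (e 2) = 0)
    (hDi : ∀ i, 3 ≤ i → D (e i) = e (i - 1)) :
    (∀ q k : ℕ, 1 ≤ q →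
      LinearIndependent K2
        (fun S : {S : Finset ℕ // (∀ i ∈ S, 2 ≤ i) ∧ S.card = q ∧ S.sum id + maxIdx S + 1 = k}
          => Fmono D S.1 (maxIdx S.1)) ∧
      Submodule.span K2 (Set.range
        (fun S : {S : Finset ℕ // (∀ i ∈ S, 2 ≤ i) ∧ S.card = q ∧ S.sum id + maxIdx S + 1 = k}
          => Fmono D S.1 (maxIdx S.1)))
        = gradedPiece {i : ℕ | 2 ≤ i} (q + 1) k ⊓ LinearMap.ker D) ∧
    rankPiece {i : ℕ | 2 ≤ i} 1 ⊓ LinearMap.ker D = Submodule.span K2 {e 2} := by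
  classical
  refine ⟨fun q k hq => ⟨?_, ?_⟩, rank1_part D hD hD2 hDi⟩
  · -- linear independence
    rw [linearIndependent_iff']
    intro s g hsum S hSs
    have hne : S.1.Nonempty := Finset.card_pos.mp (by rw [S.2.2.1]; omega)
    have h := congrArg (fun w : Lam => w (insert (maxIdx S.1 + 1) S.1)) hsum
    simp only [Finset.sum_apply', Finsupp.smul_apply, Finsupp.zero_apply] at h
    rw [Finset.sum_eq_single_of_mem S hSs] at h
    · rwa [Fmono_apply_top D hD hD2 hDi S.1 S.2.1 hne, smul_eq_mul, mul_one] at h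
    · intro S' hS's hne'
      have hne2 : S'.1.Nonempty := Finset.card_pos.mp (by rw [S'.2.2.1]; omega)
      have htc : maxIdx (insert (maxIdx S.1 + 1) S.1) - 1 ∈ insert (maxIdx S.1 + 1) S.1 := by
        rw [maxIdx_insert_top (fun j hj => by have := le_maxIdx hj; omega)]
        simp only [Nat.add_sub_cancel]
        exact Finset.mem_insert_of_mem (maxIdx_mem hne)
      rw [Fmono_apply_tc_zero D hD hD2 hDi S'.1 S'.2.1 hne2 _ htc
        (fun hEq => hne' (Subtype.ext (tcset_inj hEq)).symm), smul_zero]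
  · -- span
    apply le_antisymm
    · rw [Submodule.span_le]
      rintro _ ⟨S, rfl⟩
      have hne : S.1.Nonempty := Finset.card_pos.mp (by rw [S.2.2.1]; omega)
      refine Submodule.mem_inf.mpr
        ⟨?_, LinearMap.mem_ker.mpr (D_Fmono D hD hD2 hDi S.1 S.2.1 hne)⟩
      have := Fmono_mem_graded D hD hD2 hDi S.1 S.2.1 hne
      rwa [S.2.2.1, S.2.2.2] at this
    · intro x hx
      rw [Submodule.mem_inf, LinearMap.mem_ker] at hx
      obtain ⟨hxg, hxk⟩ := hx
      have hxg' := hxg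
      rw [gradedPiece_eq, mem_supported_iff] at hxg'
      have hxP : ∀ T, x T ≠ 0 → (∀ i ∈ T, 2 ≤ i) ∧ T.card = q + 1 ∧ T.sum id = k := by
        intro T hT
        obtain ⟨h1, h2, h3⟩ := hxg' T hT
        exact ⟨fun i hi => h1 hi, h2, h3⟩
      set 𝒯 := x.support.filter (fun T => maxIdx T - 1 ∈ T) with h𝒯
      have hTdata : ∀ T ∈ 𝒯, (∀ i ∈ T.erase (maxIdx T), 2 ≤ i)
          ∧ (T.erase (maxIdx T)).card = q
          ∧ (T.erase (maxIdx T)).sum id + maxIdx (T.erase (maxIdx T)) + 1 = k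
          ∧ maxIdx (T.erase (maxIdx T)) = maxIdx T - 1
          ∧ insert (maxIdx (T.erase (maxIdx T)) + 1) (T.erase (maxIdx T)) = T := by
        intro T hT
        rw [h𝒯, Finset.mem_filter] at hT
        obtain ⟨hTs, hTtc⟩ := hT
        obtain ⟨hb, hc, hsum⟩ := hxP T (Finsupp.mem_support_iff.mp hTs)
        have hTne : T.Nonempty := Finset.card_pos.mp (by omega)
        have hM : maxIdx T ∈ T := maxIdx_mem hTne
        have hM2 : 2 ≤ maxIdx T := hb _ hM
        have hmaxE : maxIdx (T.erase (maxIdx T)) = maxIdx T - 1 := by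
          apply le_antisymm
          · refine Finset.sup_le fun j hj => ?_
            have h1 := le_maxIdx (Finset.mem_of_mem_erase hj)
            have h2 := (Finset.mem_erase.mp hj).1
            simp only [id_eq]; omega
          · exact le_maxIdx (Finset.mem_erase.mpr ⟨by omega, hTtc⟩)
        have hsumE : (T.erase (maxIdx T)).sum id + maxIdx T = T.sum id := by
          have := Finset.add_sum_erase T id hM
          simp only [id_eq] at this ⊢
          omega
        have hMle : maxIdx T ≤ T.sum id :=
          Finset.single_le_sum (f := id) (fun i _ => Nat.zero_le _) hM
        refine ⟨fun i hi => hb i (Finset.mem_of_mem_erase hi),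
          by rw [Finset.card_erase_of_mem hM]; omega,
          by rw [hmaxE]; omega,
          hmaxE,
          by rw [hmaxE, show maxIdx T - 1 + 1 = maxIdx T by omega, Finset.insert_erase hM]⟩
      set z : Lam :=
        ∑ T ∈ 𝒯, x T • Fmono D (T.erase (maxIdx T)) (maxIdx (T.erase (maxIdx T))) with hz
      have hzspan : z ∈ Submodule.span K2 (Set.range
          (fun S : {S : Finset ℕ // (∀ i ∈ S, 2 ≤ i) ∧ S.card = q ∧ S.sum id + maxIdx S + 1 = k}
            => Fmono D S.1 (maxIdx S.1))) := by
        rw [hz]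
        refine Submodule.sum_mem _ fun T hT => ?_
        obtain ⟨d1, d2, d3, _, _⟩ := hTdata T hT
        exact Submodule.smul_mem _ _
          (Submodule.subset_span ⟨⟨T.erase (maxIdx T), d1, d2, d3⟩, rfl⟩)
      have hzg : z ∈ gradedPiece {i : ℕ | 2 ≤ i} (q + 1) k := by
        rw [hz]
        refine Submodule.sum_mem _ fun T hT => ?_
        obtain ⟨d1, d2, d3, _, _⟩ := hTdata T hT
        have hne : (T.erase (maxIdx T)).Nonempty := Finset.card_pos.mp (by omega)
        refine Submodule.smul_mem _ _ ?_
        have := Fmono_mem_graded D hD hD2 hDi _ d1 hne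
        rwa [d2, d3] at this
      have hzk : D z = 0 := by
        rw [hz, map_sum]
        refine Finset.sum_eq_zero fun T hT => ?_
        obtain ⟨d1, d2, _, _, _⟩ := hTdata T hT
        rw [map_smul, D_Fmono D hD hD2 hDi _ d1 (Finset.card_pos.mp (by omega)), smul_zero]
      have hy0 : x - z = 0 := by
        apply crux D hD hD2 hDi q k hq
        · intro T hT
          have hmem : x - z ∈ gradedPiece {i : ℕ | 2 ≤ i} (q + 1) k :=
            Submodule.sub_mem _ hxg hzg
          rw [gradedPiece_eq, mem_supported_iff] at hmem
          obtain ⟨h1, h2, h3⟩ := hmem T hT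
          exact ⟨fun i hi => h1 hi, h2, h3⟩
        · rw [map_sub, hxk, hzk, sub_zero]
        · intro T' hT'ne
          by_contra htc'
          apply hT'ne
          rw [Finsupp.sub_apply, hz, Finset.sum_apply']
          have hterm : ∀ T ∈ 𝒯,
              (x T • Fmono D (T.erase (maxIdx T)) (maxIdx (T.erase (maxIdx T)))) T'
                = if T = T' then x T else 0 := by
            intro T hT
            obtain ⟨d1, d2, _, _, d5⟩ := hTdata T hT
            have hne : (T.erase (maxIdx T)).Nonempty := Finset.card_pos.mp (by omega)
            rw [Finsupp.smul_apply]
            by_cases hTT : T = T'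
            · rw [if_pos hTT, ← hTT]
              have htop := Fmono_apply_top D hD hD2 hDi _ d1 hne
              rw [d5] at htop
              rw [htop, smul_eq_mul, mul_one]
            · rw [if_neg hTT, Fmono_apply_tc_zero D hD hD2 hDi _ d1 hne T' htc'
                (fun hEq => hTT (by rw [d5] at hEq; exact hEq.symm)), smul_zero]
          rw [Finset.sum_congr rfl hterm]
          by_cases hT'mem : T' ∈ 𝒯
          · rw [Finset.sum_eq_single_of_mem T' hT'mem (fun T _ hne => if_neg hne),
              if_pos rfl, sub_self]
          · have hx0 : x T' = 0 := by
              by_contra h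
              exact hT'mem (Finset.mem_filter.mpr ⟨Finsupp.mem_support_iff.mpr h, htc'⟩)
            rw [Finset.sum_eq_zero (fun T hT => if_neg
              (fun (hEq : T = T') => hT'mem (hEq ▸ hT))), hx0, sub_zero]
      have hxz : x = z := by rwa [sub_eq_zero] at hy0
      rw [hxz]
      exact hzspan
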